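/- For all real numbers r1, r2 ≥ 0 with (r1, r2) ≠ (0, 0), one has ((r1 + r2)/√(r1² + r2²)) · K₁(√(r1² + r2²)) = ∫₁^∞ (√2 · u / √(u² − 1)) · exp(−((r1 + r2)/√2)·u) · cos(((r1 − r2)/√2)·√(u² − 1)) du. -/

import Mathlib

open MeasureTheory

noncomputable section

namespace K1Aux

open Set Filter

/-! ### Elementary bounds -/

lemma half_le_cosh {θ : ℝ} : θ / 2 ≤ Real.cosh θ := by
  have h1 := Real.add_one_le_exp θ
  have h2 := (Real.exp_pos (-θ)).le
  rw [Real.cosh_eq]; linarith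

lemma self_le_exp_mul {ε t : ℝ} (hε : 0 < ε) : t ≤ ε⁻¹ * Real.exp (ε * t) := by
  have h1 := Real.add_one_le_exp (ε * t)
  have h2 : ε * t ≤ Real.exp (ε * t) := by linarith
  calc t = ε⁻¹ * (ε * t) := by field_simp
    _ ≤ ε⁻¹ * Real.exp (ε * t) := by
        exact mul_le_mul_of_nonneg_left h2 (by positivity)

lemma cosh_sq_exp_le {c θ : ℝ} (hc : 0 < c) (hθ : 0 ≤ θ) :
    Real.cosh θ ^ 2 * Real.exp (-(c * Real.cosh θ)) ≤ (4 / c) ^ 2 * Real.exp (-(c / 4) * θ) := by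
  set t := Real.cosh θ with ht
  have ht0 : 0 < t := Real.cosh_pos θ
  have ht2 : θ / 2 ≤ t := half_le_cosh
  have h1 : t ≤ (4 / c) * Real.exp (c / 4 * t) := by
    have := self_le_exp_mul (ε := c / 4) (t := t) (by positivity)
    calc t ≤ (c / 4)⁻¹ * Real.exp (c / 4 * t) := this
      _ = (4 / c) * Real.exp (c / 4 * t) := by rw [inv_div]
  have h2 : t ^ 2 ≤ (4 / c) ^ 2 * Real.exp (c / 4 * t) ^ 2 := by
    calc t ^ 2 ≤ ((4 / c) * Real.exp (c / 4 * t)) ^ 2 := by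
          apply pow_le_pow_left₀ ht0.le h1
      _ = (4 / c) ^ 2 * Real.exp (c / 4 * t) ^ 2 := by ring
  calc t ^ 2 * Real.exp (-(c * t))
      ≤ ((4 / c) ^ 2 * Real.exp (c / 4 * t) ^ 2) * Real.exp (-(c * t)) := by
        exact mul_le_mul_of_nonneg_right h2 (Real.exp_pos _).le
    _ = (4 / c) ^ 2 * Real.exp (-(c / 2) * t) := by
        rw [← Real.exp_nat_mul]
        rw [mul_assoc, ← Real.exp_add]
        ring_nf
    _ ≤ (4 / c) ^ 2 * Real.exp (-(c / 4) * θ) := by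
        apply mul_le_mul_of_nonneg_left _ (by positivity)
        apply Real.exp_le_exp.2
        nlinarith

/-- Workhorse integrability criterion. -/
lemma integrableOn_of_bound {E : Type*} [NormedAddCommGroup E] {c M : ℝ} (hc : 0 < c)
    (hM : 0 ≤ M) {f : ℝ → E} (hf : AEStronglyMeasurable f (volume.restrict (Ioi 0)))
    (hb : ∀ θ ∈ Ioi (0 : ℝ),
      ‖f θ‖ ≤ M * (Real.cosh θ ^ 2 * Real.exp (-(c * Real.cosh θ)))) :
    IntegrableOn f (Ioi 0) := by
  have hg : IntegrableOn (fun θ : ℝ => M * ((4 / c) ^ 2 * Real.exp (-(c / 4) * θ))) (Ioi 0) :=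
    ((exp_neg_integrableOn_Ioi 0 (by positivity : (0:ℝ) < c / 4)).const_mul _).const_mul _
  refine Integrable.mono' hg hf ?_
  filter_upwards [ae_restrict_mem measurableSet_Ioi] with θ hθ
  refine (hb θ hθ).trans ?_
  exact mul_le_mul_of_nonneg_left (cosh_sq_exp_le hc (le_of_lt hθ)) hM

lemma tendsto_cosh_exp {c : ℝ} (hc : 0 < c) :
    Tendsto (fun θ : ℝ => Real.cosh θ * Real.exp (-(c * Real.cosh θ))) atTop (nhds 0) := by
  have h1 : Tendsto (fun t : ℝ => t * Real.exp (-(c * t))) atTop (nhds 0) := by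
    have h2 : Tendsto (fun t : ℝ => c * t) atTop atTop :=
      Tendsto.const_mul_atTop hc tendsto_id
    have h3 := (Real.tendsto_pow_mul_exp_neg_atTop_nhds_zero 1).comp h2
    have h4 : Tendsto (fun t : ℝ => c⁻¹ * ((c * t) ^ 1 * Real.exp (-(c * t)))) atTop
        (nhds (c⁻¹ * 0)) := h3.const_mul _
    rw [mul_zero] at h4
    convert h4 using 2 with t
    field_simp
  have h5 : Tendsto Real.cosh atTop atTop := by
    apply tendsto_atTop_mono (fun θ : ℝ => half_le_cosh)
    exact (tendsto_id.atTop_div_const (by norm_num))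
  exact h1.comp h5


/-! ### Complex hyperbolic facts -/

lemma mk_re (x y : ℝ) : ((x : ℂ) + (y : ℂ) * Complex.I).re = x := by simp

lemma mk_im (x y : ℝ) : ((x : ℂ) + (y : ℂ) * Complex.I).im = y := by simp

lemma ccosh (θ s : ℝ) : Complex.cosh (θ + s * Complex.I) =
    ((Real.cosh θ * Real.cos s : ℝ) : ℂ) + ((Real.sinh θ * Real.sin s : ℝ) : ℂ) * Complex.I := by
  rw [Complex.cosh_add, Complex.cosh_mul_I, Complex.sinh_mul_I,
    ← Complex.ofReal_cosh, ← Complex.ofReal_sinh, ← Complex.ofReal_cos, ← Complex.ofReal_sin]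
  push_cast
  ring

lemma csinh (θ s : ℝ) : Complex.sinh (θ + s * Complex.I) =
    ((Real.sinh θ * Real.cos s : ℝ) : ℂ) + ((Real.cosh θ * Real.sin s : ℝ) : ℂ) * Complex.I := by
  rw [Complex.sinh_add, Complex.cosh_mul_I, Complex.sinh_mul_I,
    ← Complex.ofReal_cosh, ← Complex.ofReal_sinh, ← Complex.ofReal_cos, ← Complex.ofReal_sin]
  push_cast
  ring

lemma ccosh_re (θ s : ℝ) : (Complex.cosh (θ + s * Complex.I)).re = Real.cosh θ * Real.cos s := by
  rw [ccosh, mk_re]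

lemma ccosh_im (θ s : ℝ) : (Complex.cosh (θ + s * Complex.I)).im = Real.sinh θ * Real.sin s := by
  rw [ccosh, mk_im]

lemma csinh_re (θ s : ℝ) : (Complex.sinh (θ + s * Complex.I)).re = Real.sinh θ * Real.cos s := by
  rw [csinh, mk_re]

lemma csinh_im (θ s : ℝ) : (Complex.sinh (θ + s * Complex.I)).im = Real.cosh θ * Real.sin s := by
  rw [csinh, mk_im]

lemma norm_aux {x y m : ℝ} (hm : 0 ≤ m) (hsum : x ^ 2 + y ^ 2 ≤ m ^ 2) :
    ‖((x : ℂ) + (y : ℂ) * Complex.I)‖ ≤ m := by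
  rw [Complex.norm_def, Complex.normSq_add_mul_I]
  calc Real.sqrt (x ^ 2 + y ^ 2) ≤ Real.sqrt (m ^ 2) := Real.sqrt_le_sqrt hsum
    _ = m := by rw [Real.sqrt_sq hm]

lemma norm_ccosh (θ s : ℝ) : ‖Complex.cosh (θ + s * Complex.I)‖ ≤ Real.cosh θ := by
  rw [ccosh]
  apply norm_aux (Real.cosh_pos θ).le
  nlinarith [Real.sin_sq_add_cos_sq s, Real.cosh_sq θ, sq_nonneg (Real.sin s),
    sq_nonneg (Real.cos s), sq_nonneg (Real.sinh θ), Real.cosh_pos θ]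

lemma norm_csinh (θ s : ℝ) : ‖Complex.sinh (θ + s * Complex.I)‖ ≤ Real.cosh θ := by
  rw [csinh]
  apply norm_aux (Real.cosh_pos θ).le
  nlinarith [Real.sin_sq_add_cos_sq s, Real.cosh_sq θ, sq_nonneg (Real.sin s),
    sq_nonneg (Real.cos s), sq_nonneg (Real.sinh θ), Real.cosh_pos θ]

/-! ### The function `g` and its derivative -/

def gg (z : ℝ) (w : ℂ) : ℂ := Complex.exp (-z * Complex.cosh w) * Complex.cosh w

def gg' (z : ℝ) (w : ℂ) : ℂ :=
  Complex.exp (-z * Complex.cosh w) * (Complex.sinh w - z * Complex.sinh w * Complex.cosh w)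

lemma hasDerivAt_exp_cosh (z : ℝ) (w : ℂ) :
    HasDerivAt (fun w => Complex.exp (-z * Complex.cosh w))
      (-z * Complex.sinh w * Complex.exp (-z * Complex.cosh w)) w := by
  have h := ((Complex.hasDerivAt_cosh w).const_mul (-z : ℂ)).cexp
  refine h.congr_deriv ?_
  ring

lemma hasDerivAt_gg (z : ℝ) (w : ℂ) : HasDerivAt (gg z) (gg' z w) w := by
  have h := (hasDerivAt_exp_cosh z w).mul (Complex.hasDerivAt_cosh w)
  refine h.congr_deriv ?_
  unfold gg'
  ring

lemma norm_cexp_cosh (z : ℝ) (θ s : ℝ) :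
    ‖Complex.exp (-z * Complex.cosh (θ + s * Complex.I))‖ =
      Real.exp (-(z * Real.cos s * Real.cosh θ)) := by
  rw [Complex.norm_exp]
  congr 1
  simp [Complex.mul_re, ccosh_re, ccosh_im]
  ring

lemma norm_gg (z : ℝ) (θ s : ℝ) :
    ‖gg z (θ + s * Complex.I)‖ ≤ Real.cosh θ * Real.exp (-(z * Real.cos s * Real.cosh θ)) := by
  unfold gg
  rw [norm_mul, norm_cexp_cosh, mul_comm (Real.cosh θ)]
  exact mul_le_mul_of_nonneg_left (norm_ccosh θ s) (Real.exp_pos _).le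

lemma norm_gg' (z : ℝ) (θ s : ℝ) :
    ‖gg' z (θ + s * Complex.I)‖ ≤
      (1 + |z|) * (Real.cosh θ ^ 2 * Real.exp (-(z * Real.cos s * Real.cosh θ))) := by
  unfold gg'
  rw [norm_mul, norm_cexp_cosh]
  have hch : (1 : ℝ) ≤ Real.cosh θ := Real.one_le_cosh θ
  have hs := norm_csinh θ s
  have hc := norm_ccosh θ s
  have h2 : ‖Complex.sinh (θ + s * Complex.I) - z * Complex.sinh (θ + s * Complex.I) *
      Complex.cosh (θ + s * Complex.I)‖ ≤ (1 + |z|) * Real.cosh θ ^ 2 := by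
    have hB : ‖(z : ℂ) * Complex.sinh (θ + s * Complex.I) *
        Complex.cosh (θ + s * Complex.I)‖ = |z| * ‖Complex.sinh (θ + s * Complex.I)‖ *
        ‖Complex.cosh (θ + s * Complex.I)‖ := by
      rw [norm_mul, norm_mul, Complex.norm_real, Real.norm_eq_abs]
    calc ‖Complex.sinh (θ + s * Complex.I) - z * Complex.sinh (θ + s * Complex.I) *
          Complex.cosh (θ + s * Complex.I)‖
        ≤ ‖Complex.sinh (θ + s * Complex.I)‖ + ‖(z : ℂ) * Complex.sinh (θ + s * Complex.I) *
          Complex.cosh (θ + s * Complex.I)‖ := norm_sub_le _ _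
      _ ≤ (1 + |z|) * Real.cosh θ ^ 2 := by
          rw [hB]
          nlinarith [abs_nonneg z, norm_nonneg (Complex.sinh (θ + s * Complex.I)),
            norm_nonneg (Complex.cosh (θ + s * Complex.I)), Real.cosh_pos θ,
            mul_le_mul (mul_le_mul_of_nonneg_left hs (abs_nonneg z)) hc
              (norm_nonneg _) (by positivity : (0:ℝ) ≤ |z| * Real.cosh θ)]
  calc Real.exp (-(z * Real.cos s * Real.cosh θ)) * ‖_‖
      ≤ Real.exp (-(z * Real.cos s * Real.cosh θ)) * ((1 + |z|) * Real.cosh θ ^ 2) :=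
        mul_le_mul_of_nonneg_left h2 (Real.exp_pos _).le
    _ = (1 + |z|) * (Real.cosh θ ^ 2 * Real.exp (-(z * Real.cos s * Real.cosh θ))) := by ring

lemma gg_ofReal_re (z θ : ℝ) : (gg z (θ : ℂ)).re =
    Real.cosh θ * Real.exp (-(z * Real.cosh θ)) := by
  unfold gg
  rw [← Complex.ofReal_cosh]
  have h : (-(z : ℂ) * ((Real.cosh θ : ℝ) : ℂ)) = ((-(z * Real.cosh θ) : ℝ) : ℂ) := by
    push_cast; ring
  rw [h, ← Complex.ofReal_exp, ← Complex.ofReal_mul, Complex.ofReal_re]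
  ring

lemma continuous_gg (z : ℝ) : Continuous (gg z) := by
  unfold gg
  fun_prop

lemma continuous_gg' (z : ℝ) : Continuous (gg' z) := by
  unfold gg'
  fun_prop


/-! ### FTC lemmas -/

lemma continuous_line (s : ℝ) : Continuous (fun θ : ℝ => (θ : ℂ) + s * Complex.I) := by
  continuity

lemma hasDerivAt_horiz {f f' : ℂ → ℂ} (hf : ∀ w, HasDerivAt f (f' w) w) (s θ : ℝ) :
    HasDerivAt (fun θ : ℝ => f (θ + s * Complex.I)) (f' (θ + s * Complex.I)) θ := by
  have hinner : HasDerivAt (fun w : ℂ => w + s * Complex.I) 1 (θ : ℂ) :=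
    (hasDerivAt_id (θ : ℂ)).add_const _
  have h1 := (hf ((θ : ℂ) + s * Complex.I)).comp (θ : ℂ) hinner
  simpa using h1.comp_ofReal

lemma hasDerivAt_vert {f f' : ℂ → ℂ} (hf : ∀ w, HasDerivAt f (f' w) w) (θ s : ℝ) :
    HasDerivAt (fun s : ℝ => f (θ + s * Complex.I))
      (Complex.I * f' (θ + s * Complex.I)) s := by
  have hinner : HasDerivAt (fun w : ℂ => (θ : ℂ) + w * Complex.I) Complex.I (s : ℂ) := by
    simpa using ((hasDerivAt_id (s : ℂ)).mul_const Complex.I).const_add (θ : ℂ)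
  have h1 := (hf ((θ : ℂ) + s * Complex.I)).comp (s : ℂ) hinner
  have h2 := h1.comp_ofReal
  refine h2.congr_deriv ?_
  ring

lemma gg_mul_I (z s : ℝ) :
    gg z (s * Complex.I) = ((Real.exp (-(z * Real.cos s)) * Real.cos s : ℝ) : ℂ) := by
  unfold gg
  rw [Complex.cosh_mul_I, ← Complex.ofReal_cos]
  have h : (-(z : ℂ) * ((Real.cos s : ℝ) : ℂ)) = ((-(z * Real.cos s) : ℝ) : ℂ) := by
    push_cast; ring
  rw [h, ← Complex.ofReal_exp, ← Complex.ofReal_mul]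

lemma vert_strip (z s : ℝ) (hzc : 0 < z * Real.cos s) :
    ∫ θ in Ioi (0 : ℝ), gg' z (θ + s * Complex.I) =
      -((Real.exp (-(z * Real.cos s)) * Real.cos s : ℝ) : ℂ) := by
  have key := MeasureTheory.integral_Ioi_of_hasDerivAt_of_tendsto (a := (0:ℝ))
    (f := fun θ : ℝ => gg z (θ + s * Complex.I))
    (f' := fun θ : ℝ => gg' z (θ + s * Complex.I)) (m := 0)
    (((continuous_gg z).comp (continuous_line s)).continuousWithinAt)
    (fun θ _ => hasDerivAt_horiz (hasDerivAt_gg z) s θ)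
    ?_ ?_
  · rw [key]
    simp [gg_mul_I]
  · apply integrableOn_of_bound hzc (by positivity : (0:ℝ) ≤ 1 + |z|)
      (((continuous_gg' z).comp (continuous_line s)).aestronglyMeasurable)
    intro θ _
    exact norm_gg' z θ s
  · apply squeeze_zero_norm (fun θ => norm_gg z θ s)
    exact tendsto_cosh_exp hzc

lemma integral_hh (z s : ℝ) (hz : 0 < z) (hzc : 0 < z * Real.cos s) :
    ∫ θ in Ioi (0 : ℝ),
        Complex.exp (-z * Complex.cosh (θ + s * Complex.I)) * Complex.sinh (θ + s * Complex.I) =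
      ((z⁻¹ * Real.exp (-(z * Real.cos s)) : ℝ) : ℂ) := by
  have hcexp : Continuous (fun θ : ℝ => Complex.exp (-z * Complex.cosh (θ + s * Complex.I))) :=
    Complex.continuous_exp.comp
      (continuous_const.mul (Complex.continuous_cosh.comp (continuous_line s)))
  have hderiv : ∀ θ : ℝ, HasDerivAt
      (fun θ : ℝ => (-(z : ℂ)⁻¹) * Complex.exp (-z * Complex.cosh (θ + s * Complex.I)))
      (Complex.exp (-z * Complex.cosh (θ + s * Complex.I)) * Complex.sinh (θ + s * Complex.I))
      θ := by
    intro θ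
    have h1 := (hasDerivAt_horiz (f := fun w => Complex.exp (-z * Complex.cosh w))
      (hasDerivAt_exp_cosh z) s θ).const_mul (-(z : ℂ)⁻¹)
    refine h1.congr_deriv ?_
    have hzne : (z : ℂ) ≠ 0 := by exact_mod_cast hz.ne'
    field_simp
  have key := MeasureTheory.integral_Ioi_of_hasDerivAt_of_tendsto (a := (0:ℝ))
    (f := fun θ : ℝ => (-(z : ℂ)⁻¹) * Complex.exp (-z * Complex.cosh (θ + s * Complex.I)))
    (f' := fun θ : ℝ =>
      Complex.exp (-z * Complex.cosh (θ + s * Complex.I)) * Complex.sinh (θ + s * Complex.I))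
    (m := 0) ((continuous_const.mul hcexp).continuousWithinAt) (fun θ _ => hderiv θ) ?_ ?_
  · rw [key]
    have h0 : ((0:ℝ) : ℂ) + (s : ℂ) * Complex.I = s * Complex.I := by simp
    simp only [h0, Complex.cosh_mul_I, ← Complex.ofReal_cos]
    have h : (-(z : ℂ) * ((Real.cos s : ℝ) : ℂ)) = ((-(z * Real.cos s) : ℝ) : ℂ) := by
      push_cast; ring
    rw [h, ← Complex.ofReal_exp]
    push_cast
    ring
  · have hsinh : Continuous (fun θ : ℝ => Complex.sinh ((θ : ℂ) + s * Complex.I)) :=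
      Complex.continuous_sinh.comp (continuous_line s)
    have hmeas : AEStronglyMeasurable (fun θ : ℝ =>
        Complex.exp (-z * Complex.cosh (θ + s * Complex.I)) * Complex.sinh (θ + s * Complex.I))
        (volume.restrict (Ioi 0)) := (hcexp.mul hsinh).aestronglyMeasurable
    apply integrableOn_of_bound hzc (zero_le_one) hmeas
    intro θ _
    rw [norm_mul, norm_cexp_cosh, one_mul]
    nlinarith [mul_le_mul_of_nonneg_left (norm_csinh θ s)
        (Real.exp_pos (-(z * Real.cos s * Real.cosh θ))).le,
      mul_pos (Real.cosh_pos θ) (Real.exp_pos (-(z * Real.cos s * Real.cosh θ))),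
      Real.one_le_cosh θ]
  · apply squeeze_zero_norm
      (a := fun θ => z⁻¹ * (Real.cosh θ * Real.exp (-(z * Real.cos s * Real.cosh θ))))
    · intro θ
      rw [norm_mul, norm_cexp_cosh, norm_neg, norm_inv, Complex.norm_real, Real.norm_eq_abs,
        abs_of_pos hz]
      have h1 : (1:ℝ) ≤ Real.cosh θ := Real.one_le_cosh θ
      have h2 : (0:ℝ) < z⁻¹ := by positivity
      exact mul_le_mul_of_nonneg_left
        (le_mul_of_one_le_left (Real.exp_pos _).le h1) h2.le
    · have := (tendsto_cosh_exp hzc).const_mul (z⁻¹)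
      simpa using this


/-! ### Real integrands -/

lemma abs_sinh_le_cosh (x : ℝ) : |Real.sinh x| ≤ Real.cosh x := by
  rw [Real.abs_sinh, ← Real.cosh_abs]
  exact (Real.sinh_lt_cosh _).le

def cInt (a b θ : ℝ) : ℝ :=
  Real.exp (-(a * Real.cosh θ)) * Real.cos (b * Real.sinh θ) * Real.cosh θ

def sInt (a b θ : ℝ) : ℝ :=
  Real.exp (-(a * Real.cosh θ)) * Real.sin (b * Real.sinh θ) * Real.sinh θ

lemma abs_triple_le {e co x ch : ℝ} (he : 0 < e) (hch : 1 ≤ ch) (hco : |co| ≤ 1)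
    (hx : |x| ≤ ch) : |e * co * x| ≤ ch ^ 2 * e := by
  rw [abs_mul, abs_mul, abs_of_pos he]
  have h0 : 0 ≤ |x| := abs_nonneg x
  have h1 : |co| * |x| ≤ 1 * ch := mul_le_mul hco hx h0 zero_le_one
  rw [one_mul] at h1
  have h2 : e * (|co| * |x|) ≤ e * ch := mul_le_mul_of_nonneg_left h1 he.le
  nlinarith [mul_pos he (lt_of_lt_of_le one_pos hch)]

lemma integrableOn_cInt {a : ℝ} (ha : 0 < a) (b : ℝ) : IntegrableOn (cInt a b) (Ioi 0) := by
  apply integrableOn_of_bound ha zero_le_one (Continuous.aestronglyMeasurable (by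
    unfold cInt; fun_prop))
  intro θ _
  rw [one_mul, Real.norm_eq_abs]
  exact abs_triple_le (Real.exp_pos _) (Real.one_le_cosh θ) (Real.abs_cos_le_one _)
    (by rw [abs_of_pos (Real.cosh_pos θ)])

lemma integrableOn_sInt {a : ℝ} (ha : 0 < a) (b : ℝ) : IntegrableOn (sInt a b) (Ioi 0) := by
  apply integrableOn_of_bound ha zero_le_one (Continuous.aestronglyMeasurable (by
    unfold sInt; fun_prop))
  intro θ _
  rw [one_mul, Real.norm_eq_abs]
  exact abs_triple_le (Real.exp_pos _) (Real.one_le_cosh θ) (Real.abs_sin_le_one _)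
    (abs_sinh_le_cosh θ)

lemma re_gg_line {z a b φ : ℝ} (hzc : z * Real.cos φ = a) (hzs : z * Real.sin φ = b) (θ : ℝ) :
    (gg z (θ + φ * Complex.I)).re = Real.cos φ * cInt a b θ + Real.sin φ * sInt a b θ := by
  unfold gg
  rw [Complex.mul_re, Complex.exp_re, Complex.exp_im]
  have hre : ((-z : ℂ) * Complex.cosh (θ + φ * Complex.I)).re = -(a * Real.cosh θ) := by
    simp only [Complex.mul_re, Complex.neg_re, Complex.ofReal_re, Complex.neg_im,
      Complex.ofReal_im, ccosh_re, ccosh_im, neg_zero, zero_mul, sub_zero]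
    linear_combination (-(Real.cosh θ)) * hzc
  have him : ((-z : ℂ) * Complex.cosh (θ + φ * Complex.I)).im = -(b * Real.sinh θ) := by
    simp only [Complex.mul_im, Complex.neg_re, Complex.ofReal_re, Complex.neg_im,
      Complex.ofReal_im, ccosh_re, ccosh_im, neg_zero, zero_mul, add_zero]
    linear_combination (-(Real.sinh θ)) * hzs
  rw [hre, him, ccosh_re θ φ, ccosh_im θ φ, Real.cos_neg, Real.sin_neg]
  unfold cInt sInt
  ring

lemma im_hh_line {z a b φ : ℝ} (hzc : z * Real.cos φ = a) (hzs : z * Real.sin φ = b) (θ : ℝ) :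
    (Complex.exp (-z * Complex.cosh (θ + φ * Complex.I)) *
      Complex.sinh (θ + φ * Complex.I)).im =
      Real.sin φ * cInt a b θ - Real.cos φ * sInt a b θ := by
  rw [Complex.mul_im, Complex.exp_re, Complex.exp_im]
  have hre : ((-z : ℂ) * Complex.cosh (θ + φ * Complex.I)).re = -(a * Real.cosh θ) := by
    simp only [Complex.mul_re, Complex.neg_re, Complex.ofReal_re, Complex.neg_im,
      Complex.ofReal_im, ccosh_re, ccosh_im, neg_zero, zero_mul, sub_zero]
    linear_combination (-(Real.cosh θ)) * hzc
  have him : ((-z : ℂ) * Complex.cosh (θ + φ * Complex.I)).im = -(b * Real.sinh θ) := by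
    simp only [Complex.mul_im, Complex.neg_re, Complex.ofReal_re, Complex.neg_im,
      Complex.ofReal_im, ccosh_re, ccosh_im, neg_zero, zero_mul, add_zero]
    linear_combination (-(Real.sinh θ)) * hzs
  rw [hre, him, csinh_re θ φ, csinh_im θ φ, Real.cos_neg, Real.sin_neg]
  unfold cInt sInt
  ring

/-! ### The core identity -/

lemma core {a b : ℝ} (ha : 0 < a) (hb : 0 ≤ b) :
    ∫ θ in Ioi (0:ℝ), cInt a b θ =
      (a / Real.sqrt (a ^ 2 + b ^ 2)) *
        ∫ θ in Ioi (0:ℝ), Real.cosh θ * Real.exp (-(Real.sqrt (a ^ 2 + b ^ 2) * Real.cosh θ)) := by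
  set z := Real.sqrt (a ^ 2 + b ^ 2) with hzdef
  have hz : 0 < z := Real.sqrt_pos.2 (by positivity)
  set φ := Real.arctan (b / a) with hφdef
  have hφ0 : 0 ≤ φ := by
    rw [hφdef, ← Real.arctan_zero]
    exact Real.arctan_strictMono.monotone (div_nonneg hb ha.le)
  have hφlt : φ < Real.pi / 2 := Real.arctan_lt_pi_div_two _
  have hsq : Real.sqrt (1 + (b / a) ^ 2) = z / a := by
    rw [show (1 : ℝ) + (b / a) ^ 2 = (a ^ 2 + b ^ 2) / a ^ 2 by field_simp,
      Real.sqrt_div (by positivity), Real.sqrt_sq ha.le]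
  have hzcosφ : z * Real.cos φ = a := by
    rw [hφdef, Real.cos_arctan, hsq]
    field_simp
  have hzsinφ : z * Real.sin φ = b := by
    rw [hφdef, Real.sin_arctan, hsq]
    field_simp
  have hza : ∀ s ∈ Icc (0:ℝ) φ, a ≤ z * Real.cos s := by
    intro s hs
    have hsπ : φ ≤ Real.pi := le_trans hφlt.le (by linarith [Real.pi_pos])
    have hc := Real.cos_le_cos_of_nonneg_of_le_pi hs.1 hsπ hs.2
    calc a = z * Real.cos φ := hzcosφ.symm
      _ ≤ z * Real.cos s := mul_le_mul_of_nonneg_left hc hz.le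
  have hpos : ∀ s ∈ Icc (0:ℝ) φ, 0 < z * Real.cos s := fun s hs =>
    lt_of_lt_of_le ha (hza s hs)
  -- integrabilities
  have hIc1 : IntegrableOn (cInt a b) (Ioi 0) := integrableOn_cInt ha b
  have hIs1 : IntegrableOn (sInt a b) (Ioi 0) := integrableOn_sInt ha b
  have hIggφ : IntegrableOn (fun θ : ℝ => gg z (θ + φ * Complex.I)) (Ioi 0) := by
    apply integrableOn_of_bound ha zero_le_one
      (((continuous_gg z).comp (continuous_line φ)).aestronglyMeasurable)
    intro θ _
    rw [one_mul]
    refine (norm_gg z θ φ).trans ?_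
    rw [hzcosφ]
    nlinarith [Real.one_le_cosh θ, Real.exp_pos (-(a * Real.cosh θ)),
      mul_pos (Real.cosh_pos θ) (Real.exp_pos (-(a * Real.cosh θ)))]
  have hIgg0 : IntegrableOn (fun θ : ℝ => gg z (θ : ℂ)) (Ioi 0) := by
    apply integrableOn_of_bound hz zero_le_one
      (((continuous_gg z).comp Complex.continuous_ofReal).aestronglyMeasurable)
    intro θ _
    rw [one_mul]
    have h := norm_gg z θ 0
    rw [show ((θ : ℂ) + (0:ℝ) * Complex.I) = (θ : ℂ) by simp, Real.cos_zero, mul_one] at h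
    refine h.trans ?_
    nlinarith [Real.one_le_cosh θ, Real.exp_pos (-(z * Real.cosh θ)),
      mul_pos (Real.cosh_pos θ) (Real.exp_pos (-(z * Real.cosh θ)))]
  have hIhh : IntegrableOn (fun θ : ℝ =>
      Complex.exp (-z * Complex.cosh (θ + φ * Complex.I)) *
        Complex.sinh (θ + φ * Complex.I)) (Ioi 0) := by
    have hcexp : Continuous (fun θ : ℝ => Complex.exp (-z * Complex.cosh (θ + φ * Complex.I))) :=
      Complex.continuous_exp.comp
        (continuous_const.mul (Complex.continuous_cosh.comp (continuous_line φ)))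
    have hsinh : Continuous (fun θ : ℝ => Complex.sinh ((θ : ℂ) + φ * Complex.I)) :=
      Complex.continuous_sinh.comp (continuous_line φ)
    apply integrableOn_of_bound ha zero_le_one ((hcexp.mul hsinh).aestronglyMeasurable)
    intro θ _
    rw [one_mul, Pi.mul_apply, norm_mul, norm_cexp_cosh, hzcosφ]
    nlinarith [mul_le_mul_of_nonneg_left (norm_csinh θ φ)
        (Real.exp_pos (-(a * Real.cosh θ))).le,
      mul_pos (Real.cosh_pos θ) (Real.exp_pos (-(a * Real.cosh θ))),
      Real.one_le_cosh θ]
  -- vertical FTC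
  have ftcθ : ∀ θ : ℝ, gg z (θ + φ * Complex.I) - gg z (θ : ℂ) =
      ∫ s in Ioc (0:ℝ) φ, Complex.I * gg' z (θ + s * Complex.I) := by
    intro θ
    have h1 : ∀ s ∈ uIcc (0:ℝ) φ, HasDerivAt (fun s : ℝ => gg z (θ + s * Complex.I))
        (Complex.I * gg' z (θ + s * Complex.I)) s :=
      fun s _ => hasDerivAt_vert (hasDerivAt_gg z) θ s
    have h2 : IntervalIntegrable (fun s : ℝ => Complex.I * gg' z (θ + s * Complex.I))
        volume 0 φ := by
      apply Continuous.intervalIntegrable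
      have hl : Continuous (fun s : ℝ => (θ : ℂ) + (s : ℂ) * Complex.I) :=
        continuous_const.add (Complex.continuous_ofReal.mul continuous_const)
      exact continuous_const.mul ((continuous_gg' z).comp hl)
    have h3 := intervalIntegral.integral_eq_sub_of_hasDerivAt h1 h2
    rw [intervalIntegral.integral_of_le hφ0] at h3
    rw [h3]
    norm_num
  -- rewrite difference of integrals as a double integral and swap
  have hprod : Integrable (fun p : ℝ × ℝ => Complex.I * gg' z (p.1 + p.2 * Complex.I))
      ((volume.restrict (Ioi 0)).prod (volume.restrict (Ioc 0 φ))) := by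
    have hD : Integrable (fun θ : ℝ =>
        (1 + |z|) * (Real.cosh θ ^ 2 * Real.exp (-(a * Real.cosh θ))))
        (volume.restrict (Ioi 0)) := by
      apply integrableOn_of_bound ha (by positivity : (0:ℝ) ≤ 1 + |z|)
        (Continuous.aestronglyMeasurable (by fun_prop))
      intro θ _
      rw [Real.norm_eq_abs, abs_of_nonneg (by positivity)]
    have hone : IntegrableOn (fun _ : ℝ => (1:ℝ)) (Ioc 0 φ) := by
      rw [integrableOn_const_iff]
      exact Or.inr measure_Ioc_lt_top
    have hDone := hD.mul_prod hone
    apply Integrable.mono' hDone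
    · have hl2 : Continuous (fun p : ℝ × ℝ => (p.1 : ℂ) + (p.2 : ℂ) * Complex.I) :=
        ((Complex.continuous_ofReal.comp continuous_fst).add
          ((Complex.continuous_ofReal.comp continuous_snd).mul continuous_const))
      exact (continuous_const.mul ((continuous_gg' z).comp hl2)).aestronglyMeasurable
    · rw [Measure.prod_restrict]
      filter_upwards [ae_restrict_mem (measurableSet_Ioi.prod measurableSet_Ioc)] with p hp
      rw [norm_mul, Complex.norm_I, one_mul, mul_one]
      refine (norm_gg' z p.1 p.2).trans ?_
      apply mul_le_mul_of_nonneg_left _ (by positivity : (0:ℝ) ≤ 1 + |z|)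
      apply mul_le_mul_of_nonneg_left _ (by positivity : (0:ℝ) ≤ Real.cosh p.1 ^ 2)
      apply Real.exp_le_exp.2
      apply neg_le_neg
      exact mul_le_mul_of_nonneg_right (hza p.2 ⟨hp.2.1.le, hp.2.2⟩) (Real.cosh_pos p.1).le
  have hdiff : (∫ θ in Ioi (0:ℝ), gg z (θ + φ * Complex.I)) - ∫ θ in Ioi (0:ℝ), gg z (θ : ℂ) =
      ∫ s in Ioc (0:ℝ) φ, ∫ θ in Ioi (0:ℝ), Complex.I * gg' z (θ + s * Complex.I) := by
    rw [← integral_sub hIggφ hIgg0]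
    rw [show (fun θ : ℝ => gg z (θ + φ * Complex.I) - gg z (θ : ℂ)) =
      (fun θ : ℝ => ∫ s in Ioc (0:ℝ) φ, Complex.I * gg' z (θ + s * Complex.I)) from
      funext ftcθ]
    exact MeasureTheory.integral_integral_swap hprod
  have hTre : (∫ s in Ioc (0:ℝ) φ, ∫ θ in Ioi (0:ℝ), Complex.I * gg' z (θ + s * Complex.I)).re
      = 0 := by
    have hEq : ∀ s ∈ Ioc (0:ℝ) φ, (∫ θ in Ioi (0:ℝ), Complex.I * gg' z (θ + s * Complex.I)) =
        (-Complex.I) * ((Real.exp (-(z * Real.cos s)) * Real.cos s : ℝ) : ℂ) := by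
      intro s hs
      rw [MeasureTheory.integral_const_mul, vert_strip z s (hpos s ⟨hs.1.le, hs.2⟩)]
      ring
    rw [setIntegral_congr_fun measurableSet_Ioc (fun s hs => hEq s hs)]
    have hI : IntegrableOn (fun s : ℝ =>
        (-Complex.I) * ((Real.exp (-(z * Real.cos s)) * Real.cos s : ℝ) : ℂ)) (Ioc 0 φ) := by
      apply Continuous.integrableOn_Ioc
      apply continuous_const.mul
      exact Complex.continuous_ofReal.comp (by fun_prop)
    have h2 := integral_re hI
    simp only [RCLike.re_to_complex] at h2
    rw [← h2]
    have hz0 : ∀ s : ℝ,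
        ((-Complex.I) * ((Real.exp (-(z * Real.cos s)) * Real.cos s : ℝ) : ℂ)).re = 0 := by
      intro s
      simp only [Complex.mul_re, Complex.neg_re, Complex.neg_im, Complex.I_re, Complex.I_im,
        Complex.ofReal_re, Complex.ofReal_im, neg_zero, zero_mul, mul_zero]
      ring
    simp only [hz0, integral_zero]
  have hreφ : (∫ θ in Ioi (0:ℝ), gg z (θ + φ * Complex.I)).re =
      Real.cos φ * (∫ θ in Ioi (0:ℝ), cInt a b θ) +
        Real.sin φ * ∫ θ in Ioi (0:ℝ), sInt a b θ := by
    have h1 := integral_re hIggφ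
    simp only [RCLike.re_to_complex] at h1
    rw [← h1]
    rw [show (fun θ : ℝ => (gg z (θ + φ * Complex.I)).re) =
      (fun θ : ℝ => Real.cos φ * cInt a b θ + Real.sin φ * sInt a b θ) from
      funext (re_gg_line hzcosφ hzsinφ)]
    rw [integral_add (hIc1.const_mul _) (hIs1.const_mul _),
      MeasureTheory.integral_const_mul, MeasureTheory.integral_const_mul]
  have hreK : (∫ θ in Ioi (0:ℝ), gg z (θ : ℂ)).re =
      ∫ θ in Ioi (0:ℝ), Real.cosh θ * Real.exp (-(z * Real.cosh θ)) := by
    have h1 := integral_re hIgg0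
    simp only [RCLike.re_to_complex] at h1
    rw [← h1]
    congr 1
    exact funext fun θ => gg_ofReal_re z θ
  have eq1 : Real.cos φ * (∫ θ in Ioi (0:ℝ), cInt a b θ) +
      Real.sin φ * (∫ θ in Ioi (0:ℝ), sInt a b θ) =
      ∫ θ in Ioi (0:ℝ), Real.cosh θ * Real.exp (-(z * Real.cosh θ)) := by
    have h := congrArg Complex.re hdiff
    rw [Complex.sub_re, hTre, hreφ, hreK] at h
    linarith
  -- imaginary part of the hh integral
  have eq2 : Real.sin φ * (∫ θ in Ioi (0:ℝ), cInt a b θ) -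
      Real.cos φ * (∫ θ in Ioi (0:ℝ), sInt a b θ) = 0 := by
    have h := congrArg Complex.im (integral_hh z φ hz (hpos φ ⟨hφ0, le_refl φ⟩))
    rw [Complex.ofReal_im] at h
    have h2 := integral_im hIhh
    simp only [RCLike.im_to_complex] at h2
    rw [← h2] at h
    rw [show (fun θ : ℝ => (Complex.exp (-z * Complex.cosh (θ + φ * Complex.I)) *
        Complex.sinh (θ + φ * Complex.I)).im) =
      (fun θ : ℝ => Real.sin φ * cInt a b θ - Real.cos φ * sInt a b θ) from
      funext (im_hh_line hzcosφ hzsinφ)] at h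
    rw [integral_sub (hIc1.const_mul _) (hIs1.const_mul _),
      MeasureTheory.integral_const_mul, MeasureTheory.integral_const_mul] at h
    exact h
  have hpyth := Real.sin_sq_add_cos_sq φ
  have hcos : Real.cos φ = a / z := by
    rw [eq_div_iff hz.ne']
    linear_combination hzcosφ
  rw [← hcos]
  linear_combination Real.cos φ * eq1 + Real.sin φ * eq2 -
    (∫ θ in Ioi (0:ℝ), cInt a b θ) * hpyth


/-! ### The substitution `t = cosh θ` -/

lemma cosh_image : Real.cosh '' Ioi (0:ℝ) = Ioi 1 := by
  apply Subset.antisymm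
  · rintro y ⟨θ, hθ, rfl⟩
    exact Real.one_lt_cosh.2 (ne_of_gt hθ)
  · intro y hy
    have hy1 : (1:ℝ) < y := hy
    set s := Real.sqrt (y ^ 2 - 1) with hsdef
    have hs0 : 0 ≤ s := Real.sqrt_nonneg _
    have hs : s ^ 2 = y ^ 2 - 1 := Real.sq_sqrt (by nlinarith)
    have hw : (1:ℝ) < y + s := by nlinarith
    have hwpos : (0:ℝ) < y + s := by linarith
    refine ⟨Real.log (y + s), Real.log_pos hw, ?_⟩
    have hinv : (y + s)⁻¹ = y - s := by
      apply inv_eq_of_mul_eq_one_right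
      nlinarith
    rw [Real.cosh_eq, Real.exp_log hwpos, Real.exp_neg, Real.exp_log hwpos, hinv]
    ring

lemma subst_cosh (g : ℝ → ℝ) :
    ∫ t in Ioi (1:ℝ), g t = ∫ θ in Ioi (0:ℝ), Real.sinh θ * g (Real.cosh θ) := by
  rw [← cosh_image, integral_image_eq_integral_abs_deriv_smul measurableSet_Ioi
    (fun x _ => (Real.hasDerivAt_cosh x).hasDerivWithinAt)
    (Real.cosh_strictMonoOn.injOn.mono Set.Ioi_subset_Ici_self) g]
  apply setIntegral_congr_fun measurableSet_Ioi
  intro θ hθ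
  simp only [smul_eq_mul]
  rw [abs_of_pos (Real.sinh_pos_iff.2 hθ)]

lemma K1_int {Z : ℝ} (hZ : 0 < Z) :
    Z * ∫ t in Ioi (1:ℝ), Real.exp (-Z * t) * Real.sqrt (t ^ 2 - 1) =
      ∫ θ in Ioi (0:ℝ), Real.cosh θ * Real.exp (-(Z * Real.cosh θ)) := by
  rw [subst_cosh (fun t => Real.exp (-Z * t) * Real.sqrt (t ^ 2 - 1))]
  have h1 : EqOn (fun θ : ℝ => Real.sinh θ *
      (Real.exp (-Z * Real.cosh θ) * Real.sqrt (Real.cosh θ ^ 2 - 1)))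
      (fun θ : ℝ => Real.sinh θ ^ 2 * Real.exp (-(Z * Real.cosh θ))) (Ioi 0) := by
    intro θ hθ
    have hss : Real.cosh θ ^ 2 - 1 = Real.sinh θ ^ 2 := by nlinarith [Real.cosh_sq θ]
    simp only [hss, Real.sqrt_sq (Real.sinh_pos_iff.2 hθ).le]
    ring_nf
  rw [setIntegral_congr_fun measurableSet_Ioi h1]
  -- integration by parts via FTC on `Ioi 0`
  have hderiv : ∀ θ : ℝ, HasDerivAt (fun θ : ℝ => -(Real.exp (-(Z * Real.cosh θ)) * Real.sinh θ))
      (Z * Real.sinh θ ^ 2 * Real.exp (-(Z * Real.cosh θ)) -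
        Real.cosh θ * Real.exp (-(Z * Real.cosh θ))) θ := by
    intro θ
    have hinner : HasDerivAt (fun θ : ℝ => -(Z * Real.cosh θ)) (-(Z * Real.sinh θ)) θ :=
      ((Real.hasDerivAt_cosh θ).const_mul Z).neg
    have he := hinner.exp
    have h := (he.mul (Real.hasDerivAt_sinh θ)).neg
    refine h.congr_deriv ?_
    ring
  have hI1 : IntegrableOn (fun θ : ℝ => Z * Real.sinh θ ^ 2 * Real.exp (-(Z * Real.cosh θ)))
      (Ioi 0) := by
    apply integrableOn_of_bound hZ hZ.le (Continuous.aestronglyMeasurable (by fun_prop))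
    intro θ _
    rw [Real.norm_eq_abs, abs_of_nonneg (by positivity)]
    have hs := abs_sinh_le_cosh θ
    have h1 : Real.sinh θ ^ 2 ≤ Real.cosh θ ^ 2 := by
      rw [← sq_abs (Real.sinh θ)]
      exact pow_le_pow_left₀ (abs_nonneg _) hs 2
    nlinarith [mul_le_mul_of_nonneg_left (mul_le_mul_of_nonneg_right h1
      (Real.exp_pos (-(Z * Real.cosh θ))).le) hZ.le]
  have hI2 : IntegrableOn (fun θ : ℝ => Real.cosh θ * Real.exp (-(Z * Real.cosh θ))) (Ioi 0) := by
    apply integrableOn_of_bound hZ zero_le_one (Continuous.aestronglyMeasurable (by fun_prop))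
    intro θ _
    rw [one_mul, Real.norm_eq_abs, abs_of_nonneg (by positivity)]
    nlinarith [Real.exp_pos (-(Z * Real.cosh θ)), Real.one_le_cosh θ,
      mul_pos (Real.cosh_pos θ) (Real.exp_pos (-(Z * Real.cosh θ)))]
  have key := MeasureTheory.integral_Ioi_of_hasDerivAt_of_tendsto (a := (0:ℝ))
    (f := fun θ : ℝ => -(Real.exp (-(Z * Real.cosh θ)) * Real.sinh θ))
    (f' := fun θ : ℝ => Z * Real.sinh θ ^ 2 * Real.exp (-(Z * Real.cosh θ)) -
      Real.cosh θ * Real.exp (-(Z * Real.cosh θ)))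
    (m := 0) (Continuous.continuousWithinAt (by fun_prop)) (fun θ _ => hderiv θ)
    (hI1.sub hI2) ?_
  · have hsub := integral_sub hI1 hI2
    rw [key] at hsub
    norm_num [Real.sinh_zero] at hsub
    have hZmul : (∫ θ in Ioi (0:ℝ), Z * Real.sinh θ ^ 2 * Real.exp (-(Z * Real.cosh θ))) =
        Z * ∫ θ in Ioi (0:ℝ), Real.sinh θ ^ 2 * Real.exp (-(Z * Real.cosh θ)) := by
      rw [← MeasureTheory.integral_const_mul]
      congr 1
      ext θ
      ring
    rw [hZmul] at hsub
    linarith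
  · apply squeeze_zero_norm
      (a := fun θ : ℝ => Real.cosh θ * Real.exp (-(Z * Real.cosh θ)))
    · intro θ
      rw [norm_neg, Real.norm_eq_abs, abs_mul, Real.abs_exp]
      calc Real.exp (-(Z * Real.cosh θ)) * |Real.sinh θ|
          ≤ Real.exp (-(Z * Real.cosh θ)) * Real.cosh θ :=
            mul_le_mul_of_nonneg_left (abs_sinh_le_cosh θ) (Real.exp_pos _).le
        _ = Real.cosh θ * Real.exp (-(Z * Real.cosh θ)) := mul_comm _ _
    · exact tendsto_cosh_exp hZ

lemma rhs_subst (a' b' : ℝ) :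
    ∫ u in Ioi (1:ℝ), Real.sqrt 2 * u / Real.sqrt (u ^ 2 - 1) * Real.exp (-a' * u) *
        Real.cos (b' * Real.sqrt (u ^ 2 - 1)) =
      Real.sqrt 2 * ∫ θ in Ioi (0:ℝ), cInt a' b' θ := by
  rw [subst_cosh (fun u => Real.sqrt 2 * u / Real.sqrt (u ^ 2 - 1) * Real.exp (-a' * u) *
    Real.cos (b' * Real.sqrt (u ^ 2 - 1)))]
  rw [← MeasureTheory.integral_const_mul]
  apply setIntegral_congr_fun measurableSet_Ioi
  intro θ hθ
  have hsp : 0 < Real.sinh θ := Real.sinh_pos_iff.2 hθ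
  have hss : Real.cosh θ ^ 2 - 1 = Real.sinh θ ^ 2 := by nlinarith [Real.cosh_sq θ]
  simp only [hss, Real.sqrt_sq hsp.le]
  unfold cInt
  field_simp


end K1Aux

/-- The modified Bessel function of the second kind `K₁`, via its integral representation
`K₁(z) = z · ∫₁^∞ e^{−zt} (t² − 1)^{1/2} dt`. -/
def K1 (z : ℝ) : ℝ := z * ∫ t in Set.Ioi (1:ℝ), Real.exp (-z*t) * Real.sqrt (t^2 - 1)

open K1Aux in
theorem stmt1 (r1 r2 : ℝ) (hr1 : 0 ≤ r1) (hr2 : 0 ≤ r2) (hne : (r1, r2) ≠ (0, 0)) :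
    (r1 + r2)/Real.sqrt (r1^2 + r2^2) * K1 (Real.sqrt (r1^2 + r2^2)) =
      ∫ u in Set.Ioi (1:ℝ),
        Real.sqrt 2 * u / Real.sqrt (u^2 - 1) * Real.exp (-((r1 + r2)/Real.sqrt 2) * u) *
          Real.cos ((r1 - r2)/Real.sqrt 2 * Real.sqrt (u^2 - 1)) := by
  wlog hle : r2 ≤ r1 generalizing r1 r2 with H
  · push_neg at hle
    have hne' : (r2, r1) ≠ ((0:ℝ), (0:ℝ)) := by
      simp only [ne_eq, Prod.mk.injEq, not_and] at hne ⊢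
      intro h2 h1
      exact hne h1 h2
    have h := H r2 r1 hr2 hr1 hne' hle.le
    rw [add_comm r2 r1, show r2^2 + r1^2 = r1^2 + r2^2 by ring] at h
    rw [h]
    apply setIntegral_congr_fun measurableSet_Ioi
    intro u _
    simp only
    rw [show (r2 - r1)/Real.sqrt 2 * Real.sqrt (u^2 - 1) =
      -((r1 - r2)/Real.sqrt 2 * Real.sqrt (u^2 - 1)) by ring, Real.cos_neg]
  · have h2 : (0:ℝ) < Real.sqrt 2 := by positivity
    have hr12 : 0 < r1 + r2 := by
      rcases lt_or_eq_of_le (by positivity : (0:ℝ) ≤ r1 + r2) with h | h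
      · exact h
      · exfalso
        apply hne
        have h1 : r1 = 0 := by linarith
        have h2' : r2 = 0 := by linarith
        rw [h1, h2']
    set a := (r1 + r2)/Real.sqrt 2 with hadef
    set b := (r1 - r2)/Real.sqrt 2 with hbdef
    have ha : 0 < a := div_pos hr12 h2
    have hb : 0 ≤ b := div_nonneg (by linarith) h2.le
    have hsq2 : (Real.sqrt 2) ^ 2 = 2 := Real.sq_sqrt (by norm_num)
    have hab : a ^ 2 + b ^ 2 = r1 ^ 2 + r2 ^ 2 := by
      rw [hadef, hbdef, div_pow, div_pow, hsq2]
      ring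
    have hz : 0 < Real.sqrt (r1 ^ 2 + r2 ^ 2) := Real.sqrt_pos.2 (by nlinarith)
    have hrhs := rhs_subst a b
    have hcore := core ha hb
    rw [hab] at hcore
    rw [hrhs, hcore]
    unfold K1
    rw [K1_int hz]
    have hr12a : r1 + r2 = Real.sqrt 2 * a := by
      rw [hadef]
      field_simp
    rw [hr12a]
    ring

end
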